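/- Let b be an odd positive integer and let G ⊆ O(2) be the dihedral group generated by reflections across lines at angles 0 and π/b. Let r₂ be the reflection across the y-axis. Then for every α ∈ G, the composition α ∘ r₂ is not the identity, and if α ∘ r₂ has a real eigenvector of eigenvalue ±1 and is a rotation, then α ∘ r₂ is rotation by π. -/

import Mathlib

noncomputable def rotMat (φ : ℝ) : Matrix (Fin 2) (Fin 2) ℝ :=
  !![Real.cos φ, -Real.sin φ; Real.sin φ, Real.cos φ]

noncomputable def reflMat (θ : ℝ) : Matrix (Fin 2) (Fin 2) ℝ :=
  !![Real.cos (2*θ), Real.sin (2*θ); Real.sin (2*θ), -Real.cos (2*θ)]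

lemma rot_mul_rot (φ ψ : ℝ) : rotMat φ * rotMat ψ = rotMat (φ + ψ) := by
  ext i j
  fin_cases i <;> fin_cases j <;>
    simp [rotMat, Matrix.mul_apply, Fin.sum_univ_two, Real.cos_add, Real.sin_add] <;> ring

lemma rot_mul_refl (φ θ : ℝ) : rotMat φ * reflMat θ = reflMat (θ + φ/2) := by
  ext i j
  fin_cases i <;> fin_cases j <;>
    simp [rotMat, reflMat, Matrix.mul_apply, Fin.sum_univ_two, Real.cos_add, Real.sin_add,
      mul_add, mul_div_cancel₀] <;> ring_nf <;>
    simp [Real.cos_add, Real.sin_add] <;> ring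

lemma refl_mul_rot (φ θ : ℝ) : reflMat θ * rotMat φ = reflMat (θ - φ/2) := by
  ext i j
  fin_cases i <;> fin_cases j <;>
    simp [rotMat, reflMat, Matrix.mul_apply, Fin.sum_univ_two, mul_sub] <;> ring_nf <;>
    simp [Real.cos_sub, Real.sin_sub, Real.cos_add, Real.sin_add] <;> ring

lemma refl_mul_refl (θ θ' : ℝ) : reflMat θ * reflMat θ' = rotMat (2*(θ - θ')) := by
  ext i j
  fin_cases i <;> fin_cases j <;>
    simp [rotMat, reflMat, Matrix.mul_apply, Fin.sum_univ_two, mul_sub] <;> ring_nf <;>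
    simp [Real.cos_sub, Real.sin_sub] <;> ring

lemma rot_zero : rotMat 0 = 1 := by
  ext i j; fin_cases i <;> fin_cases j <;> simp [rotMat]

lemma refl_det (θ : ℝ) : (reflMat θ).det = -1 := by
  simp [reflMat, Matrix.det_fin_two_of]
  nlinarith [Real.sin_sq_add_cos_sq (2*θ)]

open Matrix in
lemma structure_lemma (b : ℕ) (hb : 0 < b)
    (g₀ g₁ : Matrix.orthogonalGroup (Fin 2) ℝ)
    (hg₀ : (g₀ : Matrix (Fin 2) (Fin 2) ℝ) = reflMat 0)
    (hg₁ : (g₁ : Matrix (Fin 2) (Fin 2) ℝ) = reflMat (Real.pi / b)) :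
    ∀ α ∈ Subgroup.closure {g₀, g₁}, ∃ k : ℤ,
      (α : Matrix (Fin 2) (Fin 2) ℝ) = rotMat (2*k*Real.pi/b) ∨
      (α : Matrix (Fin 2) (Fin 2) ℝ) = reflMat (k*Real.pi/b) := by
  intro α hα
  induction hα using Subgroup.closure_induction with
  | mem x hx =>
    rcases hx with h | h
    · exact ⟨0, Or.inr (by subst h; rw [hg₀]; norm_num)⟩
    · exact ⟨1, Or.inr (by subst h; rw [hg₁]; congr 1; push_cast; ring)⟩
  | one => exact ⟨0, Or.inl (by push_cast; simpa using rot_zero.symm)⟩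
  | mul x y hx hy ihx ihy =>
    obtain ⟨k, hk⟩ := ihx
    obtain ⟨l, hl⟩ := ihy
    have hbne : (b:ℝ) ≠ 0 := Nat.cast_ne_zero.mpr hb.ne'
    have hcoe : ((x*y : Matrix.orthogonalGroup (Fin 2) ℝ) : Matrix (Fin 2) (Fin 2) ℝ)
        = (x : Matrix (Fin 2) (Fin 2) ℝ) * (y : Matrix (Fin 2) (Fin 2) ℝ) := rfl
    rcases hk with hk | hk <;> rcases hl with hl | hl
    · exact ⟨k + l, Or.inl (by rw [hcoe, hk, hl, rot_mul_rot]; congr 1; push_cast; ring)⟩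
    · exact ⟨l + k, Or.inr (by rw [hcoe, hk, hl, rot_mul_refl]; congr 1; push_cast; ring)⟩
    · exact ⟨k - l, Or.inr (by rw [hcoe, hk, hl, refl_mul_rot]; congr 1; push_cast; ring)⟩
    · exact ⟨k - l, Or.inl (by rw [hcoe, hk, hl, refl_mul_refl]; congr 1; push_cast; ring)⟩
  | inv x hx ihx =>
    obtain ⟨k, hk⟩ := ihx
    have hinv : ((x⁻¹ : Matrix.orthogonalGroup (Fin 2) ℝ) : Matrix (Fin 2) (Fin 2) ℝ)
        * (x : Matrix (Fin 2) (Fin 2) ℝ) = 1 := by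
      have : ((x⁻¹ * x : Matrix.orthogonalGroup (Fin 2) ℝ) : Matrix (Fin 2) (Fin 2) ℝ) = 1 := by
        rw [inv_mul_cancel]; rfl
      exact this
    rcases hk with hk | hk
    · refine ⟨-k, Or.inl ?_⟩
      have h2 : (x : Matrix (Fin 2) (Fin 2) ℝ) * rotMat (2*(-k:ℤ)*Real.pi/b) = 1 := by
        rw [hk, rot_mul_rot]
        have : 2*(k:ℝ)*Real.pi/b + 2*(-k:ℤ)*Real.pi/b = 0 := by push_cast; ring
        rw [this, rot_zero]
      exact left_inv_eq_right_inv hinv h2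
    · refine ⟨k, Or.inr ?_⟩
      have h2 : (x : Matrix (Fin 2) (Fin 2) ℝ) * reflMat ((k:ℝ)*Real.pi/b) = 1 := by
        rw [hk, refl_mul_refl]; simpa using rot_zero
      exact left_inv_eq_right_inv hinv h2

lemma cos_ne_one (b : ℕ) (hb : 0 < b) (hbo : Odd b) (k : ℤ) :
    Real.cos (2*((k:ℝ)*Real.pi/b - Real.pi/2)) ≠ 1 := by
  intro h
  obtain ⟨n, hn⟩ := (Real.cos_eq_one_iff _).mp h
  have hbne : (b:ℝ) ≠ 0 := Nat.cast_ne_zero.mpr hb.ne'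
  have hπ : Real.pi ≠ 0 := Real.pi_ne_zero
  have hn' : ((n:ℝ) * (2*Real.pi)) * b = (2*((k:ℝ)*Real.pi/b - Real.pi/2)) * b := by rw [hn]
  field_simp at hn'
  have h2b : (2*(b:ℝ)) ≠ 0 := by positivity
  have key : (2*((n:ℝ)*b)) * Real.pi = ((2*k - b : ℤ) : ℝ) * Real.pi := by
    apply mul_right_cancel₀ h2b
    push_cast
    linear_combination (Real.pi * (2*(b:ℝ))) * hn'
  have key2 : 2*(n*(b:ℤ)) = 2*k - b := by
    have := mul_right_cancel₀ hπ key
    exact_mod_cast this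
  obtain ⟨m, hm⟩ := hbo
  generalize n*(b:ℤ) = j at key2
  omega

/-- Let `G` be the dihedral group generated by the reflections across lines at angles `0`
and `π/b`, `b` odd, and `r₂` the reflection across the `y`-axis. Then for every `α ∈ G`,
`α * r₂` is not the identity; and if `α * r₂` is a rotation (determinant `1`) with a
nonzero real eigenvector of eigenvalue `±1`, then `α * r₂` is rotation by `π`. -/
theorem alpha_mul_r2_ne_one_and_rotation_pi (b : ℕ) (hb : 0 < b) (hbo : Odd b)
    (g₀ g₁ r₂ : Matrix.orthogonalGroup (Fin 2) ℝ)
    (hg₀ : (g₀ : Matrix (Fin 2) (Fin 2) ℝ) = reflMat 0)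
    (hg₁ : (g₁ : Matrix (Fin 2) (Fin 2) ℝ) = reflMat (Real.pi / b))
    (hr₂ : (r₂ : Matrix (Fin 2) (Fin 2) ℝ) = reflMat (Real.pi / 2)) :
    ∀ α ∈ Subgroup.closure {g₀, g₁},
      α * r₂ ≠ 1 ∧
      (((α * r₂ : Matrix.orthogonalGroup (Fin 2) ℝ) : Matrix (Fin 2) (Fin 2) ℝ).det = 1 →
        (∃ v : Fin 2 → ℝ, v ≠ 0 ∧
          (((α * r₂ : Matrix.orthogonalGroup (Fin 2) ℝ) : Matrix (Fin 2) (Fin 2) ℝ).mulVec v = v ∨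
           ((α * r₂ : Matrix.orthogonalGroup (Fin 2) ℝ) : Matrix (Fin 2) (Fin 2) ℝ).mulVec v = -v)) →
        ((α * r₂ : Matrix.orthogonalGroup (Fin 2) ℝ) : Matrix (Fin 2) (Fin 2) ℝ) = rotMat Real.pi) := by
  intro α hα
  obtain ⟨k, hk⟩ := structure_lemma b hb g₀ g₁ hg₀ hg₁ α hα
  have hcoe : ((α * r₂ : Matrix.orthogonalGroup (Fin 2) ℝ) : Matrix (Fin 2) (Fin 2) ℝ)
      = (α : Matrix (Fin 2) (Fin 2) ℝ) * (r₂ : Matrix (Fin 2) (Fin 2) ℝ) := rfl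
  rcases hk with hk | hk
  · -- α is a rotation, α * r₂ is a reflection, det = -1
    have hM : ((α * r₂ : Matrix.orthogonalGroup (Fin 2) ℝ) : Matrix (Fin 2) (Fin 2) ℝ)
        = reflMat (Real.pi/2 + (2*(k:ℝ)*Real.pi/b)/2) := by
      rw [hcoe, hk, hr₂, rot_mul_refl]
    have hdet : ((α * r₂ : Matrix.orthogonalGroup (Fin 2) ℝ) : Matrix (Fin 2) (Fin 2) ℝ).det = -1 := by
      rw [hM]; exact refl_det _
    constructor
    · intro h
      rw [h] at hdet
      simp at hdet
      norm_num at hdet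
    · intro h1
      rw [hdet] at h1; norm_num at h1
  · -- α is a reflection, α * r₂ is a rotation by ψ
    set ψ : ℝ := 2*((k:ℝ)*Real.pi/b - Real.pi/2) with hψ
    have hM : ((α * r₂ : Matrix.orthogonalGroup (Fin 2) ℝ) : Matrix (Fin 2) (Fin 2) ℝ)
        = rotMat ψ := by
      rw [hcoe, hk, hr₂, refl_mul_refl]
    have hcos : Real.cos ψ ≠ 1 := cos_ne_one b hb hbo k
    constructor
    · intro h
      have : rotMat ψ = 1 := by rw [← hM, h]; rfl
      have := congrFun (congrFun this 0) 0
      simp [rotMat] at this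
      exact hcos this
    · rintro hdet ⟨v, hv, hcase | hcase⟩
      · exfalso
        rw [hM] at hcase
        have h0 : (rotMat ψ - 1).mulVec v = 0 := by
          rw [Matrix.sub_mulVec, hcase, Matrix.one_mulVec, sub_self]
        have hd : (rotMat ψ - 1).det = 0 :=
          (Matrix.exists_mulVec_eq_zero_iff).mp ⟨v, hv, h0⟩
        rw [Matrix.det_fin_two] at hd
        simp [rotMat, Matrix.sub_apply, Matrix.one_apply] at hd
        apply hcos
        nlinarith [Real.sin_sq_add_cos_sq ψ]
      · rw [hM] at hcase ⊢
        have h0 : (rotMat ψ + 1).mulVec v = 0 := by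
          rw [Matrix.add_mulVec, hcase, Matrix.one_mulVec, neg_add_cancel]
        have hd : (rotMat ψ + 1).det = 0 :=
          (Matrix.exists_mulVec_eq_zero_iff).mp ⟨v, hv, h0⟩
        rw [Matrix.det_fin_two] at hd
        simp [rotMat, Matrix.add_apply, Matrix.one_apply] at hd
        have hcosneg : Real.cos ψ = -1 := by nlinarith [Real.sin_sq_add_cos_sq ψ]
        have hsin : Real.sin ψ = 0 := by nlinarith [Real.sin_sq_add_cos_sq ψ]
        unfold rotMat
        rw [hcosneg, hsin, Real.cos_pi, Real.sin_pi]
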